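/- A bounded domain Ω ⊂ ℝⁿ has the segment property if and only if Ω has C⁰ boundary (i.e., ∂Ω is locally the graph of a continuous function with Ω locally on one side). -/

import Mathlib

open Set Metric

/-- A bounded open set `Ω ⊆ ℝⁿ` has the segment property: for every `p ∈ ∂Ω` there are a
neighbourhood `U` of `p` and a vector `w` with `(closure Ω ∩ U) + t • w ⊆ Ω` for all
`0 < t < 1`. -/
def SegmentProperty {n : ℕ} (Ω : Set (EuclideanSpace ℝ (Fin n))) : Prop :=
  ∀ p ∈ frontier Ω, ∃ (U : Set (EuclideanSpace ℝ (Fin n))) (w : EuclideanSpace ℝ (Fin n)),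
    IsOpen U ∧ p ∈ U ∧
      ∀ z ∈ closure Ω ∩ U, ∀ t : ℝ, 0 < t → t < 1 → z + t • w ∈ Ω

/-- A bounded open set `Ω ⊆ ℝⁿ` has `C⁰` boundary: a finite cover of `∂Ω` by balls
`B(x_j, r_j)`, `x_j ∈ ∂Ω`, such that in suitable rotated coordinates (a linear isometry
onto `ℝ^{n-1} × ℝ` composed with a translation) `Ω ∩ B(x_j, 4r_j)` is the strict
supergraph of a continuous `φ_j : ℝ^{n-1} → ℝ`, and `∂Ω ∩ B(x_j, 4r_j)` is its graph. -/
def HasC0Boundary {n : ℕ} (Ω : Set (EuclideanSpace ℝ (Fin n))) : Prop :=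
  ∃ (m : ℕ) (x : Fin m → EuclideanSpace ℝ (Fin n)) (r : Fin m → ℝ),
    (∀ j, x j ∈ frontier Ω ∧ 0 < r j) ∧
    frontier Ω ⊆ ⋃ j, ball (x j) (r j) ∧
    ∀ j, ∃ (A : EuclideanSpace ℝ (Fin n) ≃ₗᵢ[ℝ]
          WithLp 2 (EuclideanSpace ℝ (Fin (n - 1)) × ℝ))
        (b : WithLp 2 (EuclideanSpace ℝ (Fin (n - 1)) × ℝ))
        (φ : EuclideanSpace ℝ (Fin (n - 1)) → ℝ),
      Continuous φ ∧
      Ω ∩ ball (x j) (4 * r j)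
        = {z | φ (WithLp.equiv 2 _ (A z + b)).1 < (WithLp.equiv 2 _ (A z + b)).2}
            ∩ ball (x j) (4 * r j) ∧
      frontier Ω ∩ ball (x j) (4 * r j)
        = {z | (WithLp.equiv 2 _ (A z + b)).2 = φ (WithLp.equiv 2 _ (A z + b)).1}
            ∩ ball (x j) (4 * r j)



noncomputable def eVec (n : ℕ) : WithLp 2 (EuclideanSpace ℝ (Fin (n-1)) × ℝ) :=
  (WithLp.equiv 2 _).symm (0, 1)

lemma norm_eVec (n : ℕ) : ‖eVec n‖ = 1 := by
  rw [eVec, WithLp.prod_norm_eq_of_L2]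
  simp [WithLp.equiv_symm_apply]

lemma exists_isometry_mapsto {n : ℕ} (hn : 1 ≤ n) (u : EuclideanSpace ℝ (Fin n))
    (hu : ‖u‖ = 1) :
    ∃ A : EuclideanSpace ℝ (Fin n) ≃ₗᵢ[ℝ] WithLp 2 (EuclideanSpace ℝ (Fin (n-1)) × ℝ),
      A u = eVec n := by
  set F := WithLp 2 (EuclideanSpace ℝ (Fin (n-1)) × ℝ)
  have h1 : Module.finrank ℝ F = n := by
    have := (WithLp.linearEquiv 2 ℝ (EuclideanSpace ℝ (Fin (n-1)) × ℝ)).finrank_eq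
    rw [this, Module.finrank_prod, finrank_euclideanSpace_fin, Module.finrank_self]
    omega
  have : FiniteDimensional ℝ F := by
    exact Module.Finite.equiv (WithLp.linearEquiv 2 ℝ (EuclideanSpace ℝ (Fin (n-1)) × ℝ)).symm
  let re : EuclideanSpace ℝ (Fin (Module.finrank ℝ F)) ≃ₗᵢ[ℝ] EuclideanSpace ℝ (Fin n) :=
    LinearIsometryEquiv.piLpCongrLeft 2 ℝ ℝ (finCongr h1)
  let J : EuclideanSpace ℝ (Fin n) ≃ₗᵢ[ℝ] F :=
    (((stdOrthonormalBasis ℝ F).repr).trans re).symm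
  have hJu : ‖J u - eVec n‖ = ‖J u - eVec n‖ := rfl
  refine ⟨J.trans (Submodule.reflection (ℝ ∙ (J u - eVec n))ᗮ), ?_⟩
  simp only [LinearIsometryEquiv.trans_apply]
  exact Submodule.reflection_sub (by rw [J.norm_map, hu, norm_eVec])

section coords
variable {n : ℕ} (A : EuclideanSpace ℝ (Fin n) ≃ₗᵢ[ℝ]
    WithLp 2 (EuclideanSpace ℝ (Fin (n - 1)) × ℝ))
    (b : WithLp 2 (EuclideanSpace ℝ (Fin (n - 1)) × ℝ))

noncomputable def gmap (y : EuclideanSpace ℝ (Fin (n-1))) (s : ℝ) :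
    EuclideanSpace ℝ (Fin n) :=
  A.symm ((WithLp.equiv 2 _).symm (y, s) - b)

lemma gmap_coords (y : EuclideanSpace ℝ (Fin (n-1))) (s : ℝ) :
    WithLp.equiv 2 _ (A (gmap A b y s) + b) = (y, s) := by
  simp [gmap]

lemma gmap_inv (z : EuclideanSpace ℝ (Fin n)) :
    gmap A b (WithLp.equiv 2 _ (A z + b)).1 (WithLp.equiv 2 _ (A z + b)).2 = z := by
  have h : (WithLp.equiv 2 _).symm ((WithLp.equiv 2 _ (A z + b)).1,
      (WithLp.equiv 2 _ (A z + b)).2) = A z + b := rfl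
  rw [gmap, h, add_sub_cancel_right, A.symm_apply_apply]

lemma gmap_dist (y y' : EuclideanSpace ℝ (Fin (n-1))) (s s' : ℝ) :
    dist (gmap A b y s) (gmap A b y' s') = Real.sqrt (dist y y' ^ 2 + dist s s' ^ 2) := by
  rw [gmap, gmap, A.symm.dist_map, dist_sub_right, WithLp.prod_dist_eq_of_L2]
  simp [WithLp.equiv_symm_apply]

lemma gmap_dist_same_fst (y : EuclideanSpace ℝ (Fin (n-1))) (s s' : ℝ) :
    dist (gmap A b y s) (gmap A b y s') = dist s s' := by
  rw [gmap_dist]; simp [Real.sqrt_sq dist_nonneg]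

lemma gmap_dist_same_snd (y y' : EuclideanSpace ℝ (Fin (n-1))) (s : ℝ) :
    dist (gmap A b y s) (gmap A b y' s) = dist y y' := by
  rw [gmap_dist]; simp [Real.sqrt_sq dist_nonneg]

lemma gmap_dist_le (y y' : EuclideanSpace ℝ (Fin (n-1))) (s s' : ℝ) :
    dist (gmap A b y s) (gmap A b y' s') ≤ dist y y' + dist s s' :=
  (dist_triangle _ (gmap A b y' s) _).trans <| by
    rw [gmap_dist_same_snd, gmap_dist_same_fst]

lemma gmap_isometry (y : EuclideanSpace ℝ (Fin (n-1))) :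
    Isometry (fun s => gmap A b y s) :=
  Isometry.of_dist_eq fun s s' => gmap_dist_same_fst A b y s s'

lemma fst_dist_le_gmap (z : EuclideanSpace ℝ (Fin n)) (p : EuclideanSpace ℝ (Fin n))
    (hb : A p + b = 0) :
    ‖(WithLp.equiv 2 _ (A z + b)).1‖ ≤ dist z p ∧
    |(WithLp.equiv 2 _ (A z + b)).2| ≤ dist z p := by
  have h : dist z p = ‖A z + b‖ := by
    rw [dist_eq_norm, ← A.norm_map (z - p)]
    congr 1
    rw [map_sub, eq_neg_of_add_eq_zero_left hb, sub_neg_eq_add]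
  have h2 := WithLp.prod_norm_eq_of_L2 (A z + b)
  have e1 : ((WithLp.equiv 2 (EuclideanSpace ℝ (Fin (n - 1)) × ℝ)) (A z + b)).1
      = (A z + b).fst := rfl
  have e2 : ((WithLp.equiv 2 (EuclideanSpace ℝ (Fin (n - 1)) × ℝ)) (A z + b)).2
      = (A z + b).snd := rfl
  have hn2 : |(A z + b).snd| = ‖(A z + b).snd‖ := (Real.norm_eq_abs _).symm
  constructor
  · rw [h, h2, e1]
    exact Real.le_sqrt_of_sq_le (by nlinarith [sq_nonneg ‖(A z + b).snd‖])
  · rw [h, h2, e2, hn2]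
    exact Real.le_sqrt_of_sq_le (by nlinarith [sq_nonneg ‖(A z + b).fst‖])

end coords

section vert
variable {n : ℕ} (A : EuclideanSpace ℝ (Fin n) ≃ₗᵢ[ℝ]
    WithLp 2 (EuclideanSpace ℝ (Fin (n - 1)) × ℝ))
    (b : WithLp 2 (EuclideanSpace ℝ (Fin (n - 1)) × ℝ))

lemma gmap_vert {c : ℝ} {w : EuclideanSpace ℝ (Fin n)} (hw : A w = c • eVec n)
    (y : EuclideanSpace ℝ (Fin (n-1))) (s t : ℝ) :
    gmap A b y s + t • w = gmap A b y (s + t * c) := by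
  have hw' : w = A.symm (c • eVec n) := by rw [← hw, A.symm_apply_apply]
  rw [hw', gmap, gmap, ← map_smul, ← map_add]
  congr 1
  rw [eVec, sub_add_eq_add_sub]
  congr 1
  simp only [WithLp.equiv_symm_apply, ← WithLp.toLp_smul, ← WithLp.toLp_add]
  congr 1
  rw [Prod.smul_mk, Prod.smul_mk, Prod.mk_add_mk]
  simp [mul_comm]

end vert

set_option maxHeartbeats 1000000 in
lemma local_graph {n : ℕ} {Ω : Set (EuclideanSpace ℝ (Fin n))} (hΩopen : IsOpen Ω)
    {p : EuclideanSpace ℝ (Fin n)} (hp : p ∈ frontier Ω)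
    {U : Set (EuclideanSpace ℝ (Fin n))} {w : EuclideanSpace ℝ (Fin n)}
    (hU : IsOpen U) (hpU : p ∈ U)
    (hseg : ∀ z ∈ closure Ω ∩ U, ∀ t : ℝ, 0 < t → t < 1 → z + t • w ∈ Ω) :
    ∃ r : ℝ, 0 < r ∧
      ∃ (A : EuclideanSpace ℝ (Fin n) ≃ₗᵢ[ℝ]
            WithLp 2 (EuclideanSpace ℝ (Fin (n - 1)) × ℝ))
        (b : WithLp 2 (EuclideanSpace ℝ (Fin (n - 1)) × ℝ))
        (φ : EuclideanSpace ℝ (Fin (n - 1)) → ℝ),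
        Continuous φ ∧
        Ω ∩ ball p (4 * r)
          = {z | φ (WithLp.equiv 2 _ (A z + b)).1 < (WithLp.equiv 2 _ (A z + b)).2}
              ∩ ball p (4 * r) ∧
        frontier Ω ∩ ball p (4 * r)
          = {z | (WithLp.equiv 2 _ (A z + b)).2 = φ (WithLp.equiv 2 _ (A z + b)).1}
              ∩ ball p (4 * r) := by
  have hpcl : p ∈ closure Ω := frontier_subset_closure hp
  have hpno : p ∉ Ω := fun h => ((hΩopen.frontier_eq ▸ hp).2) h
  have hw0 : w ≠ 0 := by
    intro h
    apply hpno
    have := hseg p ⟨hpcl, hpU⟩ (1/2) (by norm_num) (by norm_num)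
    simpa [h] using this
  have hn : 1 ≤ n := by
    by_contra hcon
    push_neg at hcon
    have hn0 : n = 0 := by omega
    subst hn0
    haveI : Subsingleton (EuclideanSpace ℝ (Fin 0)) :=
      ⟨fun a b => PiLp.ext (fun i => i.elim0)⟩
    exact hw0 (Subsingleton.elim w 0)
  set c := ‖w‖ with hc
  have hcpos : 0 < c := norm_pos_iff.mpr hw0
  have hu : ‖c⁻¹ • w‖ = 1 := by
    rw [norm_smul, norm_inv, Real.norm_eq_abs, abs_of_pos hcpos, ← hc]
    field_simp
  obtain ⟨A, hA⟩ := exists_isometry_mapsto hn (c⁻¹ • w) hu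
  have hAw : A w = c • eVec n := by
    have hwc : w = c • (c⁻¹ • w) := by
      rw [smul_smul, mul_inv_cancel₀ (ne_of_gt hcpos), one_smul]
    calc A w = A (c • (c⁻¹ • w)) := by rw [← hwc]
      _ = c • A (c⁻¹ • w) := by rw [map_smul]
      _ = c • eVec n := by rw [hA]
  set b := -(A p) with hb
  have hpb : A p + b = 0 := by simp [hb]
  have hg00 : (WithLp.equiv 2 (EuclideanSpace ℝ (Fin (n-1)) × ℝ)).symm
      ((0 : EuclideanSpace ℝ (Fin (n-1))), (0:ℝ)) = 0 := rfl
  have hg0 : gmap A b 0 0 = p := by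
    rw [gmap, hg00, zero_sub, hb, neg_neg, A.symm_apply_apply]
  have push : ∀ (y : EuclideanSpace ℝ (Fin (n-1))) (s : ℝ),
      gmap A b y s ∈ closure Ω → gmap A b y s ∈ U →
      ∀ τ : ℝ, 0 < τ → τ < c → gmap A b y (s + τ) ∈ Ω := by
    intro y s h1 h2 τ hτ hτc
    have := hseg (gmap A b y s) ⟨h1, h2⟩ (τ / c) (div_pos hτ hcpos)
      ((div_lt_one hcpos).mpr hτc)
    rwa [gmap_vert A b hAw, div_mul_cancel₀ τ (ne_of_gt hcpos)] at this
  obtain ⟨ε₀, hε₀pos, hε₀⟩ := Metric.isOpen_iff.mp hU p hpU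
  set ε₁ := min (ε₀/4) (c/4) with hε₁def
  have hε₁pos : 0 < ε₁ := lt_min (by linarith) (by linarith)
  have hε₁a : ε₁ ≤ ε₀/4 := min_le_left _ _
  have hε₁c : ε₁ ≤ c/4 := min_le_right _ _
  have hinU : ∀ (y : EuclideanSpace ℝ (Fin (n-1))) (s : ℝ),
      ‖y‖ ≤ ε₀/4 → |s| ≤ ε₀/4 → gmap A b y s ∈ U := by
    intro y s h1 h2
    apply hε₀
    rw [mem_ball]
    calc dist (gmap A b y s) p = dist (gmap A b y s) (gmap A b 0 0) := by rw [hg0]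
      _ ≤ dist y 0 + dist s 0 := gmap_dist_le A b y 0 s 0
      _ = ‖y‖ + |s| := by rw [dist_zero_right, Real.dist_eq, sub_zero]
      _ < ε₀ := by linarith
  have htopΩ : gmap A b 0 ε₁ ∈ Ω := by
    have := push 0 0 (hg0 ▸ hpcl) (hg0 ▸ hpU) ε₁ hε₁pos (by linarith)
    rwa [zero_add] at this
  obtain ⟨δ₁, hδ₁pos, hδ₁⟩ := Metric.isOpen_iff.mp hΩopen _ htopΩ
  have htop : ∀ y : EuclideanSpace ℝ (Fin (n-1)), ‖y‖ < δ₁ → gmap A b y ε₁ ∈ Ω := by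
    intro y hy
    apply hδ₁
    rw [mem_ball, gmap_dist_same_snd, dist_zero_right]
    exact hy
  set δ := min (δ₁/2) ε₁ with hδdef
  have hδpos : 0 < δ := lt_min (by linarith) hε₁pos
  have hδδ₁ : δ < δ₁ := lt_of_le_of_lt (min_le_left _ _) (by linarith)
  have hδε₁ : δ ≤ ε₁ := min_le_right _ _
  set S : EuclideanSpace ℝ (Fin (n-1)) → Set ℝ :=
    fun y => {s : ℝ | s ∈ Icc (-ε₁) ε₁ ∧ gmap A b y s ∈ closure Ω} with hSdef
  have hSbdd : ∀ y, BddBelow (S y) := fun y => ⟨-ε₁, fun s hs => hs.1.1⟩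
  have hSclosed : ∀ y, IsClosed (S y) := by
    intro y
    have : S y = Icc (-ε₁) ε₁ ∩ (fun s => gmap A b y s) ⁻¹' closure Ω := rfl
    rw [this]
    exact isClosed_Icc.inter (isClosed_closure.preimage (gmap_isometry A b y).continuous)
  have hSne : ∀ y : EuclideanSpace ℝ (Fin (n-1)), ‖y‖ ≤ δ → ε₁ ∈ S y := by
    intro y hy
    exact ⟨⟨by linarith, le_refl _⟩, subset_closure (htop y (lt_of_le_of_lt hy hδδ₁))⟩
  set φ₀ : EuclideanSpace ℝ (Fin (n-1)) → ℝ := fun y => sInf (S y) with hφ₀def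
  have hmem : ∀ y : EuclideanSpace ℝ (Fin (n-1)), ‖y‖ ≤ δ → φ₀ y ∈ S y := by
    intro y hy
    exact (hSclosed y).csInf_mem ⟨ε₁, hSne y hy⟩ (hSbdd y)
  have hlb : ∀ y : EuclideanSpace ℝ (Fin (n-1)), ‖y‖ ≤ δ → -ε₁ ≤ φ₀ y :=
    fun y hy => (hmem y hy).1.1
  have hub : ∀ y : EuclideanSpace ℝ (Fin (n-1)), ‖y‖ ≤ δ → φ₀ y ≤ ε₁ :=
    fun y hy => (hmem y hy).1.2
  have hF2 : ∀ y : EuclideanSpace ℝ (Fin (n-1)), ‖y‖ ≤ δ → ∀ s : ℝ, -ε₁ ≤ s → s < φ₀ y →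
      gmap A b y s ∉ closure Ω := by
    intro y hy s h1 h2 hcl
    have : s ∈ S y := ⟨⟨h1, by linarith [hub y hy]⟩, hcl⟩
    exact absurd (csInf_le (hSbdd y) this) (not_le.mpr h2)
  have hF3 : ∀ y : EuclideanSpace ℝ (Fin (n-1)), ‖y‖ ≤ δ → ∀ s : ℝ, φ₀ y < s →
      s < φ₀ y + c → gmap A b y s ∈ Ω := by
    intro y hy s h1 h2
    have hyU : gmap A b y (φ₀ y) ∈ U := by
      apply hinU
      · linarith [hδε₁, hε₁a]
      · rw [abs_le]
        constructor
        · linarith [hlb y hy, hε₁a]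
        · linarith [hub y hy, hε₁a]
    have := push y (φ₀ y) (hmem y hy).2 hyU (s - φ₀ y) (by linarith) (by linarith)
    rwa [add_sub_cancel] at this
  have hF5 : ∀ y : EuclideanSpace ℝ (Fin (n-1)), ‖y‖ ≤ δ → -ε₁ < φ₀ y →
      gmap A b y (φ₀ y) ∉ Ω := by
    intro y hy hlt hΩm
    obtain ⟨σ, hσpos, hσ⟩ := Metric.isOpen_iff.mp hΩopen _ hΩm
    set s := max (φ₀ y - σ/2) ((-ε₁ + φ₀ y)/2) with hs
    have hs1 : -ε₁ ≤ s := le_trans (by linarith) (le_max_right _ _)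
    have hs2 : s < φ₀ y := max_lt (by linarith) (by linarith)
    apply hF2 y hy s hs1 hs2
    apply subset_closure
    apply hσ
    rw [mem_ball, gmap_dist_same_fst, Real.dist_eq, abs_sub_lt_iff]
    constructor
    · linarith
    · linarith [le_max_left (φ₀ y - σ/2) ((-ε₁ + φ₀ y)/2)]
  have hcont : ContinuousOn φ₀ (closedBall (0 : EuclideanSpace ℝ (Fin (n-1))) δ) := by
    rw [Metric.continuousOn_iff]
    intro y₀ hy₀ η hη
    set η' := min (η/2) ε₁ with hη'def
    have hη'pos : 0 < η' := lt_min (by linarith) hε₁pos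
    have hη'η : η' < η := lt_of_le_of_lt (min_le_left _ _) (by linarith)
    have hη'ε : η' ≤ ε₁ := min_le_right _ _
    have hy₀' : ‖y₀‖ ≤ δ := by rwa [mem_closedBall, dist_zero_right] at hy₀
    have Hup : ∃ ρ > 0, ∀ y : EuclideanSpace ℝ (Fin (n-1)), ‖y‖ ≤ δ →
        dist y y₀ < ρ → φ₀ y < φ₀ y₀ + η' := by
      rcases eq_or_lt_of_le (hub y₀ hy₀') with hcase | hcase
      · exact ⟨1, one_pos, fun y hy _ =>
          lt_of_le_of_lt (le_trans (hub y hy) (le_of_eq hcase.symm)) (by linarith)⟩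
      · set sp := min (φ₀ y₀ + η'/2) ε₁ with hsp
        have h1 : φ₀ y₀ < sp := lt_min (by linarith) hcase
        have h2 : sp < φ₀ y₀ + c := lt_of_le_of_lt (min_le_left _ _) (by linarith)
        have h3 : gmap A b y₀ sp ∈ Ω := hF3 y₀ hy₀' sp h1 h2
        obtain ⟨ρ, hρpos, hρ⟩ := Metric.isOpen_iff.mp hΩopen _ h3
        refine ⟨ρ, hρpos, fun y hy hdy => ?_⟩
        have hcl : gmap A b y sp ∈ closure Ω := by
          apply subset_closure
          apply hρ
          rwa [mem_ball, gmap_dist_same_snd]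
        have hmem' : sp ∈ S y :=
          ⟨⟨by linarith [hlb y₀ hy₀'], min_le_right _ _⟩, hcl⟩
        calc φ₀ y ≤ sp := csInf_le (hSbdd y) hmem'
          _ ≤ φ₀ y₀ + η'/2 := min_le_left _ _
          _ < φ₀ y₀ + η' := by linarith
    have Hdn : ∃ ρ > 0, ∀ y : EuclideanSpace ℝ (Fin (n-1)), ‖y‖ ≤ δ →
        dist y y₀ < ρ → φ₀ y₀ - η' < φ₀ y := by
      rcases eq_or_lt_of_le (hlb y₀ hy₀') with hcase | hcase
      · exact ⟨1, one_pos, fun y hy _ =>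
          lt_of_lt_of_le (by linarith : φ₀ y₀ - η' < -ε₁) (hlb y hy)⟩
      · set sm := max (φ₀ y₀ - η'/2) (-ε₁) with hsm
        have h1 : sm < φ₀ y₀ := max_lt (by linarith) hcase
        have hCcomp : IsCompact ((fun s => gmap A b y₀ s) '' Icc (-ε₁) sm) :=
          isCompact_Icc.image (gmap_isometry A b y₀).continuous
        have hCsub : (fun s => gmap A b y₀ s) '' Icc (-ε₁) sm ⊆ (closure Ω)ᶜ := by
          rintro _ ⟨s, hs, rfl⟩
          exact hF2 y₀ hy₀' s hs.1 (lt_of_le_of_lt hs.2 h1)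
        obtain ⟨ρ, hρpos, hρ⟩ :=
          hCcomp.exists_thickening_subset_open isClosed_closure.isOpen_compl hCsub
        refine ⟨ρ, hρpos, fun y hy hdy => ?_⟩
        by_contra hcon
        push_neg at hcon
        have hφs : φ₀ y ∈ Icc (-ε₁) sm :=
          ⟨hlb y hy, le_trans (by linarith) (le_max_left _ _)⟩
        have hthick : gmap A b y (φ₀ y) ∈ thickening ρ
            ((fun s => gmap A b y₀ s) '' Icc (-ε₁) sm) := by
          rw [mem_thickening_iff]
          exact ⟨gmap A b y₀ (φ₀ y), ⟨φ₀ y, hφs, rfl⟩, by rwa [gmap_dist_same_snd]⟩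
        exact (hρ hthick) (hmem y hy).2
    obtain ⟨ρ₁, hρ₁, H1⟩ := Hup
    obtain ⟨ρ₂, hρ₂, H2⟩ := Hdn
    refine ⟨min ρ₁ ρ₂, lt_min hρ₁ hρ₂, fun y hy hdy => ?_⟩
    have hy' : ‖y‖ ≤ δ := by rwa [mem_closedBall, dist_zero_right] at hy
    have hu1 := H1 y hy' (lt_of_lt_of_le hdy (min_le_left _ _))
    have hu2 := H2 y hy' (lt_of_lt_of_le hdy (min_le_right _ _))
    rw [Real.dist_eq, abs_sub_lt_iff]
    constructor <;> linarith
  have hφ0 : φ₀ 0 = 0 := by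
    have h0δ : ‖(0 : EuclideanSpace ℝ (Fin (n-1)))‖ ≤ δ := by
      rw [norm_zero]; exact le_of_lt hδpos
    have h0mem : (0:ℝ) ∈ S 0 :=
      ⟨⟨by linarith, by linarith⟩, by rw [hg0]; exact hpcl⟩
    have hle : φ₀ 0 ≤ 0 := csInf_le (hSbdd 0) h0mem
    rcases eq_or_lt_of_le hle with h | h
    · exact h
    · exfalso
      have hz := (hmem 0 h0δ).2
      have hzU : gmap A b 0 (φ₀ 0) ∈ U := by
        apply hinU
        · rw [norm_zero]; linarith
        · rw [abs_le]
          exact ⟨by linarith [hlb 0 h0δ], by linarith [hub 0 h0δ]⟩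
      have := hseg _ ⟨hz, hzU⟩ ((-φ₀ 0)/c) (div_pos (by linarith) hcpos)
        ((div_lt_one hcpos).mpr (by linarith [hlb 0 h0δ]))
      rw [gmap_vert A b hAw, div_mul_cancel₀ _ (ne_of_gt hcpos),
        add_neg_cancel, hg0] at this
      exact hpno this
  obtain ⟨Φ, hΦ⟩ := ContinuousMap.exists_restrict_eq
    (Metric.isClosed_closedBall (x := (0 : EuclideanSpace ℝ (Fin (n-1)))) (ε := δ))
    ⟨_, hcont.restrict⟩
  have hΦeq : ∀ y : EuclideanSpace ℝ (Fin (n-1)), ‖y‖ ≤ δ → Φ y = φ₀ y := by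
    intro y hy
    have hyD : y ∈ closedBall (0 : EuclideanSpace ℝ (Fin (n-1))) δ := by
      rwa [mem_closedBall, dist_zero_right]
    have := congrFun (congrArg DFunLike.coe hΦ) ⟨y, hyD⟩
    simpa using this
  obtain ⟨ρ₀, hρ₀pos, hρ₀⟩ := Metric.continuousOn_iff.mp hcont 0
    (mem_closedBall_self (le_of_lt hδpos)) (ε₁/2) (by linarith)
  set δ₂ := min (ρ₀/2) δ with hδ₂def
  have hδ₂pos : 0 < δ₂ := lt_min (by linarith) hδpos
  have hδ₂δ : δ₂ ≤ δ := min_le_right _ _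
  have hsmall : ∀ y : EuclideanSpace ℝ (Fin (n-1)), ‖y‖ ≤ δ₂ → |φ₀ y| < ε₁/2 := by
    intro y hy
    have h1 : dist y 0 < ρ₀ := by
      rw [dist_zero_right]
      calc ‖y‖ ≤ δ₂ := hy
        _ ≤ ρ₀/2 := min_le_left _ _
        _ < ρ₀ := by linarith
    have h2 : y ∈ closedBall (0 : EuclideanSpace ℝ (Fin (n-1))) δ := by
      rw [mem_closedBall, dist_zero_right]; exact le_trans hy hδ₂δ
    have := hρ₀ y h2 h1
    rwa [Real.dist_eq, hφ0, sub_zero] at this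
  set M := min δ₂ (ε₁/2) with hMdef
  have hMpos : 0 < M := lt_min hδ₂pos (by linarith)
  have hM1 : M ≤ δ₂ := min_le_left _ _
  have hM2 : M ≤ ε₁/2 := min_le_right _ _
  have hco : ∀ z ∈ ball p (4 * (M/8)),
      ‖(WithLp.equiv 2 (EuclideanSpace ℝ (Fin (n - 1)) × ℝ) (A z + b)).1‖ < δ₂ ∧
      |(WithLp.equiv 2 (EuclideanSpace ℝ (Fin (n - 1)) × ℝ) (A z + b)).2| < ε₁/2 := by
    intro z hz
    obtain ⟨h1, h2⟩ := fst_dist_le_gmap A b z p hpb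
    rw [mem_ball] at hz
    have h4r : 4 * (M/8) = M/2 := by ring
    rw [h4r] at hz
    exact ⟨lt_of_le_of_lt h1 (by linarith), lt_of_le_of_lt h2 (by linarith)⟩
  refine ⟨M/8, by linarith, A, b, Φ, Φ.continuous, ?_, ?_⟩
  · ext z
    simp only [mem_inter_iff, mem_setOf_eq]
    constructor
    · rintro ⟨hz1, hzb⟩
      refine ⟨?_, hzb⟩
      obtain ⟨hy, hs⟩ := hco z hzb
      set yz := (WithLp.equiv 2 (EuclideanSpace ℝ (Fin (n - 1)) × ℝ) (A z + b)).1 with hyz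
      set sz := (WithLp.equiv 2 (EuclideanSpace ℝ (Fin (n - 1)) × ℝ) (A z + b)).2 with hsz
      have hyδ : ‖yz‖ ≤ δ := le_trans (le_of_lt hy) hδ₂δ
      have hzg : gmap A b yz sz = z := gmap_inv A b z
      have habs := hsmall yz (le_of_lt hy)
      rw [abs_lt] at hs habs
      rw [hΦeq yz hyδ]
      have hcl : sz ∈ S yz := ⟨⟨by linarith, by linarith⟩,
        by rw [hzg]; exact subset_closure hz1⟩
      have h1 : φ₀ yz ≤ sz := csInf_le (hSbdd yz) hcl
      rcases lt_or_eq_of_le h1 with h | h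
      · exact h
      · exfalso
        apply hF5 yz hyδ (by linarith)
        rw [h, hzg]
        exact hz1
    · rintro ⟨hz1, hzb⟩
      refine ⟨?_, hzb⟩
      obtain ⟨hy, hs⟩ := hco z hzb
      set yz := (WithLp.equiv 2 (EuclideanSpace ℝ (Fin (n - 1)) × ℝ) (A z + b)).1 with hyz
      set sz := (WithLp.equiv 2 (EuclideanSpace ℝ (Fin (n - 1)) × ℝ) (A z + b)).2 with hsz
      have hyδ : ‖yz‖ ≤ δ := le_trans (le_of_lt hy) hδ₂δ
      have hzg : gmap A b yz sz = z := gmap_inv A b z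
      have habs := hsmall yz (le_of_lt hy)
      rw [hΦeq yz hyδ] at hz1
      rw [abs_lt] at hs habs
      rw [← hzg]
      exact hF3 yz hyδ sz hz1 (by linarith)
  · ext z
    simp only [mem_inter_iff, mem_setOf_eq]
    constructor
    · rintro ⟨hz1, hzb⟩
      refine ⟨?_, hzb⟩
      obtain ⟨hy, hs⟩ := hco z hzb
      set yz := (WithLp.equiv 2 (EuclideanSpace ℝ (Fin (n - 1)) × ℝ) (A z + b)).1 with hyz
      set sz := (WithLp.equiv 2 (EuclideanSpace ℝ (Fin (n - 1)) × ℝ) (A z + b)).2 with hsz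
      have hyδ : ‖yz‖ ≤ δ := le_trans (le_of_lt hy) hδ₂δ
      have hzg : gmap A b yz sz = z := gmap_inv A b z
      have habs := hsmall yz (le_of_lt hy)
      rw [abs_lt] at hs habs
      rw [hΦeq yz hyδ]
      have hzcl : z ∈ closure Ω := frontier_subset_closure hz1
      have hzno : z ∉ Ω := fun h => ((hΩopen.frontier_eq ▸ hz1).2) h
      have hcl : sz ∈ S yz := ⟨⟨by linarith, by linarith⟩, by rw [hzg]; exact hzcl⟩
      have h1 : φ₀ yz ≤ sz := csInf_le (hSbdd yz) hcl
      rcases lt_or_eq_of_le h1 with h | h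
      · exfalso
        apply hzno
        rw [← hzg]
        exact hF3 yz hyδ sz h (by linarith)
      · exact h.symm
    · rintro ⟨hz1, hzb⟩
      refine ⟨?_, hzb⟩
      obtain ⟨hy, hs⟩ := hco z hzb
      set yz := (WithLp.equiv 2 (EuclideanSpace ℝ (Fin (n - 1)) × ℝ) (A z + b)).1 with hyz
      set sz := (WithLp.equiv 2 (EuclideanSpace ℝ (Fin (n - 1)) × ℝ) (A z + b)).2 with hsz
      have hyδ : ‖yz‖ ≤ δ := le_trans (le_of_lt hy) hδ₂δ
      have hzg : gmap A b yz sz = z := gmap_inv A b z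
      have habs := hsmall yz (le_of_lt hy)
      rw [hΦeq yz hyδ] at hz1
      rw [abs_lt] at hs habs
      rw [hΩopen.frontier_eq, mem_diff]
      constructor
      · rw [← hzg, hz1]
        exact (hmem yz hyδ).2
      · rw [← hzg, hz1]
        exact hF5 yz hyδ (by linarith)

/-- A bounded domain `Ω ⊆ ℝⁿ` has the segment property if and only if it has `C⁰`
boundary. -/
theorem segmentProperty_iff_hasC0Boundary {n : ℕ} (Ω : Set (EuclideanSpace ℝ (Fin n)))
    (hΩopen : IsOpen Ω) (hΩconn : IsConnected Ω) (hΩbdd : Bornology.IsBounded Ω) :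
    SegmentProperty Ω ↔ HasC0Boundary Ω := by
  constructor
  · intro hSeg
    have H : ∀ p : EuclideanSpace ℝ (Fin n), p ∈ frontier Ω → ∃ r : ℝ, 0 < r ∧
        ∃ (A : EuclideanSpace ℝ (Fin n) ≃ₗᵢ[ℝ]
              WithLp 2 (EuclideanSpace ℝ (Fin (n - 1)) × ℝ))
          (b : WithLp 2 (EuclideanSpace ℝ (Fin (n - 1)) × ℝ))
          (φ : EuclideanSpace ℝ (Fin (n - 1)) → ℝ),
          Continuous φ ∧
          Ω ∩ ball p (4 * r)
            = {z | φ (WithLp.equiv 2 _ (A z + b)).1 < (WithLp.equiv 2 _ (A z + b)).2}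
                ∩ ball p (4 * r) ∧
          frontier Ω ∩ ball p (4 * r)
            = {z | (WithLp.equiv 2 _ (A z + b)).2 = φ (WithLp.equiv 2 _ (A z + b)).1}
                ∩ ball p (4 * r) := by
      intro p hp
      obtain ⟨U, w, hU, hpU, hseg⟩ := hSeg p hp
      exact local_graph hΩopen hp hU hpU hseg
    choose! r hr hloc using H
    have hfc : IsCompact (frontier Ω) :=
      Metric.isCompact_of_isClosed_isBounded isClosed_frontier
        (hΩbdd.closure.subset frontier_subset_closure)
    obtain ⟨t, ht⟩ := hfc.elim_finite_subcover
      (fun i : ↥(frontier Ω) => ball i.1 (r i.1)) (fun i => isOpen_ball)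
      (fun p hp => mem_iUnion.mpr ⟨⟨p, hp⟩, mem_ball_self (hr p hp)⟩)
    let e : Fin t.card ≃ {i // i ∈ t} := t.equivFin.symm
    refine ⟨t.card, fun j => ((e j).1 : EuclideanSpace ℝ (Fin n)), fun j => r (e j).1,
      fun j => ⟨(e j).1.2, hr _ (e j).1.2⟩, ?_, fun j => hloc _ (e j).1.2⟩
    intro p hp
    obtain ⟨i, hi⟩ := mem_iUnion₂.mp (ht hp)
    obtain ⟨hit, hpi⟩ := hi
    exact mem_iUnion.mpr ⟨e.symm ⟨i, hit⟩, by simpa [e] using hpi⟩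
  · rintro ⟨m, x, r, hxr, hcov, hloc⟩ p hp
    obtain ⟨j, hj⟩ : ∃ j, p ∈ ball (x j) (r j) := mem_iUnion.mp (hcov hp)
    obtain ⟨A, b, φ, hφ, h1, h2⟩ := hloc j
    obtain ⟨hxf, hrpos⟩ := hxr j
    refine ⟨ball (x j) (r j), (r j) • A.symm (eVec n), isOpen_ball, hj, ?_⟩
    rintro z ⟨hzcl, hzb⟩ t ht0 ht1
    have hAw : A ((r j) • A.symm (eVec n)) = (r j) • eVec n := by
      rw [map_smul, A.apply_symm_apply]
    have hz4 : z ∈ ball (x j) (4 * r j) := ball_subset_ball (by linarith) hzb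
    have hle : φ (WithLp.equiv 2 _ (A z + b)).1 ≤ (WithLp.equiv 2 _ (A z + b)).2 := by
      by_cases hzΩ : z ∈ Ω
      · have : z ∈ {z | φ (WithLp.equiv 2 _ (A z + b)).1 < (WithLp.equiv 2 _ (A z + b)).2}
            ∩ ball (x j) (4 * r j) := h1 ▸ ⟨hzΩ, hz4⟩
        exact le_of_lt this.1
      · have hzf : z ∈ frontier Ω := by
          rw [hΩopen.frontier_eq]; exact ⟨hzcl, hzΩ⟩
        have : z ∈ {z | (WithLp.equiv 2 _ (A z + b)).2 = φ (WithLp.equiv 2 _ (A z + b)).1}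
            ∩ ball (x j) (4 * r j) := h2 ▸ ⟨hzf, hz4⟩
        exact le_of_eq this.1.symm
    have hzval : z + t • ((r j) • A.symm (eVec n))
        = gmap A b (WithLp.equiv 2 _ (A z + b)).1
            ((WithLp.equiv 2 _ (A z + b)).2 + t * (r j)) := by
      conv_lhs => rw [← gmap_inv A b z]
      exact gmap_vert A b hAw _ _ t
    have hball : z + t • ((r j) • A.symm (eVec n)) ∈ ball (x j) (4 * r j) := by
      rw [mem_ball]
      calc dist (z + t • ((r j) • A.symm (eVec n))) (x j)
          ≤ dist (z + t • ((r j) • A.symm (eVec n))) z + dist z (x j) := dist_triangle _ _ _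
        _ < r j + r j := by
            apply add_lt_add_of_le_of_lt _ hzb
            rw [dist_eq_norm, add_sub_cancel_left, norm_smul, norm_smul,
              A.symm.norm_map, norm_eVec, mul_one, Real.norm_eq_abs, Real.norm_eq_abs,
              abs_of_pos ht0, abs_of_pos hrpos]
            nlinarith
        _ ≤ 4 * r j := by linarith
    have hmem : z + t • ((r j) • A.symm (eVec n))
        ∈ {z | φ (WithLp.equiv 2 _ (A z + b)).1 < (WithLp.equiv 2 _ (A z + b)).2}
          ∩ ball (x j) (4 * r j) := by
      refine ⟨?_, hball⟩
      rw [mem_setOf_eq, hzval, gmap_coords]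
      have : t * r j > 0 := mul_pos ht0 hrpos
      calc φ ((WithLp.equiv 2 _ (A z + b)).1, (WithLp.equiv 2 _ (A z + b)).2 + t * r j).1
          = φ (WithLp.equiv 2 _ (A z + b)).1 := rfl
        _ ≤ (WithLp.equiv 2 _ (A z + b)).2 := hle
        _ < (WithLp.equiv 2 _ (A z + b)).2 + t * r j := by linarith
    rw [← h1] at hmem
    exact hmem.1
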